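/- For every integer N ≥ 1, the set of N-tuples of integers (a_1,...,a_N) with 2 ≤ a_1 ≤ ... ≤ a_N and ∑_{j=1}^{N} 1/a_j < 1 but ∑_{j=1}^{N-1} 1/a_j + 1/(a_N - 1) ≥ 1 is finite. -/

import Mathlib

private lemma egyptian_bound_aux (n : ℕ) : ∀ k : ℕ, k ≤ n + 1 →
    ∃ B : ℤ, 2 ≤ B ∧ ∀ a : Fin (n + 1) → ℤ, Monotone a → (∀ j, 2 ≤ a j) →
      (∑ j, (1 : ℚ) / (a j : ℚ)) < 1 →
      1 ≤ (∑ j ∈ Finset.univ.erase (Fin.last n), (1 : ℚ) / (a j : ℚ))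
            + 1 / ((a (Fin.last n) : ℚ) - 1) →
      ∀ i : Fin (n + 1), (i : ℕ) < k → a i ≤ B := by
  intro k
  induction k with
  | zero => exact fun _ => ⟨2, le_refl 2, fun a _ _ _ _ i hi => absurd hi (Nat.not_lt_zero _)⟩
  | succ k ih =>
    intro hk
    obtain ⟨B, hB2, hB⟩ := ih (Nat.le_of_succ_le hk)
    refine ⟨max B ((n + 2 : ℤ) * B ^ k), le_trans hB2 (le_max_left _ _), ?_⟩
    intro a hmono ha2 hsum hext i hi
    rcases Nat.lt_or_ge (i : ℕ) k with h | h
    · exact le_trans (hB a hmono ha2 hsum hext i h) (le_max_left _ _)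
    have hik : (i : ℕ) = k := by omega
    have hkn : k ≤ n := by omega
    have haQ : ∀ j, (2 : ℚ) ≤ (a j : ℚ) := fun j => by exact_mod_cast ha2 j
    have haQ0 : ∀ j, (0 : ℚ) < (a j : ℚ) := fun j => lt_of_lt_of_le two_pos (haQ j)
    set j : Fin (n + 1) := i with hj
    -- Claim B : 1 - S1 ≥ 1 / B^k
    set s1 : Finset (Fin (n + 1)) := Finset.Iio j with hs1
    have hcard : s1.card = k := by rw [hs1, Fin.card_Iio, hik]
    set S1 : ℚ := ∑ x ∈ s1, (1 : ℚ) / (a x : ℚ) with hS1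
    have hS1lt : S1 < 1 := by
      refine lt_of_le_of_lt ?_ hsum
      apply Finset.sum_le_sum_of_subset_of_nonneg (Finset.subset_univ _)
      intro x _ _
      exact div_nonneg zero_le_one (le_of_lt (haQ0 x))
    set P : ℤ := ∏ x ∈ s1, a x with hP
    have hP0 : (0 : ℤ) < P := by
      rw [hP]; exact Finset.prod_pos (fun x _ => by linarith [ha2 x])
    have hP1 : (1 : ℤ) ≤ P := hP0
    have hPQ : (0 : ℚ) < (P : ℚ) := by exact_mod_cast hP0
    set m : ℤ := P - ∑ x ∈ s1, ∏ y ∈ s1.erase x, a y with hm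
    have hkey : S1 * (P : ℚ) = ∑ x ∈ s1, ((∏ y ∈ s1.erase x, a y : ℤ) : ℚ) := by
      rw [hS1, Finset.sum_mul]
      refine Finset.sum_congr rfl (fun x hx => ?_)
      push_cast [hP]
      have hax : ((a x : ℚ)) ≠ 0 := ne_of_gt (haQ0 x)
      rw [← Finset.mul_prod_erase s1 (fun y => ((a y : ℤ) : ℚ)) hx, one_div,
        inv_mul_cancel_left₀ hax]
    have hmP : (m : ℚ) = (1 - S1) * (P : ℚ) := by
      rw [sub_mul, one_mul, hkey, hm]
      push_cast
      ring
    have hm1 : (1 : ℤ) ≤ m := by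
      have : (0 : ℚ) < (m : ℚ) := by
        rw [hmP]; exact mul_pos (by linarith) hPQ
      exact_mod_cast this
    have hPB : P ≤ B ^ k := by
      calc P = ∏ x ∈ s1, a x := hP
        _ ≤ ∏ _x ∈ s1, B := by
            refine Finset.prod_le_prod (fun x _ => by linarith [ha2 x]) (fun x hx => ?_)
            refine hB a hmono ha2 hsum hext x ?_
            have := Finset.mem_Iio.mp hx
            simpa [Fin.lt_def, hik] using this
        _ = B ^ k := by rw [Finset.prod_const, hcard]
    have hBk0 : (0 : ℚ) < ((B : ℚ)) ^ k := by positivity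
    have hclaimB : (1 : ℚ) / (B : ℚ) ^ k ≤ 1 - S1 := by
      have h1 : (1 : ℚ) / (B : ℚ) ^ k ≤ 1 / (P : ℚ) := by
        apply one_div_le_one_div_of_le hPQ
        exact_mod_cast hPB
      have h2 : (1 : ℚ) / (P : ℚ) ≤ 1 - S1 := by
        rw [div_le_iff₀ hPQ, ← hmP]
        exact_mod_cast hm1
      linarith
    -- Claim A : 1 - S1 ≤ (n - k + 2) / a j
    have hjlast : j ≤ Fin.last n := Fin.le_last j
    have haj : (0 : ℚ) < (a j : ℚ) := haQ0 j
    have herase : Finset.univ.erase (Fin.last n) = Finset.Iio (Fin.last n) := by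
      ext x
      have hx := x.isLt
      simp only [Finset.mem_erase, Finset.mem_univ, and_true, Finset.mem_Iio, Fin.lt_def,
        Fin.last, ne_eq, Fin.ext_iff]
      omega
    have hsplit : Finset.Iio (Fin.last n) = s1 ∪ Finset.Ico j (Fin.last n) := by
      rw [hs1]
      ext x
      simp only [Finset.mem_Iio, Finset.mem_union, Finset.mem_Ico]
      constructor
      · intro hx
        rcases lt_or_ge x j with h' | h'
        · exact Or.inl h'
        · exact Or.inr ⟨h', hx⟩
      · rintro (h' | ⟨_, h'⟩)
        · exact lt_of_lt_of_le h' hjlast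
        · exact h'
    have hdisj : Disjoint s1 (Finset.Ico j (Fin.last n)) := by
      refine Finset.disjoint_left.mpr (fun x hx hx2 => ?_)
      exact absurd (Finset.mem_Ico.mp hx2).1 (not_le.mpr (Finset.mem_Iio.mp hx))
    have hmid : ∑ x ∈ Finset.Ico j (Fin.last n), (1 : ℚ) / (a x : ℚ)
        ≤ (n - k : ℕ) * (1 / (a j : ℚ)) := by
      have hc : (Finset.Ico j (Fin.last n)).card = n - k := by
        rw [Fin.card_Ico]; simp [Fin.last, hik]
      calc ∑ x ∈ Finset.Ico j (Fin.last n), (1 : ℚ) / (a x : ℚ)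
          ≤ ∑ _x ∈ Finset.Ico j (Fin.last n), (1 : ℚ) / (a j : ℚ) := by
            refine Finset.sum_le_sum (fun x hx => ?_)
            exact one_div_le_one_div_of_le haj (by exact_mod_cast hmono (Finset.mem_Ico.mp hx).1)
        _ = (n - k : ℕ) * (1 / (a j : ℚ)) := by rw [Finset.sum_const, hc, nsmul_eq_mul]
    have hlastterm : 1 / ((a (Fin.last n) : ℚ) - 1) ≤ 2 / (a j : ℚ) := by
      have h1 : (a j : ℚ) - 1 ≤ (a (Fin.last n) : ℚ) - 1 := by
        have h0 : a j ≤ a (Fin.last n) := hmono hjlast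
        have h0' : (a j : ℚ) ≤ (a (Fin.last n) : ℚ) := by exact_mod_cast h0
        linarith
      have h2 : (0 : ℚ) < (a j : ℚ) - 1 := by linarith [haQ j]
      calc 1 / ((a (Fin.last n) : ℚ) - 1) ≤ 1 / ((a j : ℚ) - 1) :=
            one_div_le_one_div_of_le h2 h1
        _ ≤ 2 / (a j : ℚ) := by
            rw [div_le_div_iff₀ h2 haj]
            linarith [haQ j]
    have hclaimA : 1 - S1 ≤ ((n - k : ℕ) + 2) / (a j : ℚ) := by
      have hthis := hext
      rw [herase, hsplit, Finset.sum_union hdisj, ← hS1] at hthis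
      have h' : (1 : ℚ) ≤ S1 + (n - k : ℕ) * (1 / (a j : ℚ)) + 2 / (a j : ℚ) := by
        linarith [hmid, hlastterm]
      rw [add_div]
      rw [mul_one_div] at h'
      linarith [h']
    -- combine
    have hfin : (a j : ℚ) ≤ ((n - k : ℕ) + 2) * (B : ℚ) ^ k := by
      have h' := le_trans hclaimB hclaimA
      rw [div_le_div_iff₀ hBk0 haj] at h'
      linarith
    have hZ : a j ≤ ((n - k : ℕ) + 2 : ℤ) * B ^ k := by exact_mod_cast hfin
    refine le_trans (le_trans hZ ?_) (le_max_right _ _)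
    have hBk0' : (0 : ℤ) < B ^ k := pow_pos (by omega) k
    have hle : ((n - k : ℕ) + 2 : ℤ) ≤ (n + 2 : ℤ) := by
      have := Nat.sub_le n k; omega
    exact mul_le_mul_of_nonneg_right hle (le_of_lt hBk0')

/-- Finiteness step in Proposition 7.17: for each `N = n+1 ≥ 1`, the set of
nondecreasing tuples of integers `≥ 2` with `∑ 1/a_j < 1` but
`∑_{j<N} 1/a_j + 1/(a_N - 1) ≥ 1` is finite. -/
theorem egyptian_fraction_extremal_finite (n : ℕ) :
    Set.Finite {a : Fin (n + 1) → ℤ | Monotone a ∧ (∀ j, 2 ≤ a j) ∧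
      (∑ j, (1 : ℚ) / (a j : ℚ)) < 1 ∧
      1 ≤ (∑ j ∈ Finset.univ.erase (Fin.last n), (1 : ℚ) / (a j : ℚ))
            + 1 / ((a (Fin.last n) : ℚ) - 1)} := by
  obtain ⟨B, hB2, hB⟩ := egyptian_bound_aux n (n + 1) le_rfl
  apply Set.Finite.subset (Set.Finite.pi (fun _ : Fin (n + 1) => Set.finite_Icc (2 : ℤ) B))
  rintro a ⟨hmono, ha2, hsum, hext⟩
  intro i _
  exact ⟨ha2 i, hB a hmono ha2 hsum hext i i.isLt⟩
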